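/- Let S and Γ be real symmetric m×m matrices, let J ⊆ {1,…,m} with |J| ≤ s, and let γ ≥ 0. Then for every nonzero vector u ∈ ℝ^m satisfying the cone condition ∑_{i ∉ J} |u_i| ≤ γ ∑_{i ∈ J} |u_i|, one has uᵀ S u ≥ ( λ_min(Γ) − (1+γ)² · s · ‖S − Γ‖_{∞,∞} ) · ‖u‖₂², where λ_min(Γ) is the smallest eigenvalue of Γ. -/

import Mathlib

open Matrix Finset

lemma quad_ge (m : ℕ) (hm : 0 < m) (Γ : Matrix (Fin m) (Fin m) ℝ) (hΓ : Γ.IsHermitian)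
    (u : Fin m → ℝ) :
    (⨅ i, hΓ.eigenvalues i) * ∑ i, u i ^ 2 ≤ u ⬝ᵥ Γ.mulVec u := by
  haveI : Nonempty (Fin m) := ⟨⟨0, hm⟩⟩
  set B := hΓ.eigenvectorBasis with hB
  set uE : EuclideanSpace ℝ (Fin m) := WithLp.toLp 2 u with huE
  have hinner : ∀ x y : EuclideanSpace ℝ (Fin m),
      inner (𝕜 := ℝ) x y = (x : Fin m → ℝ) ⬝ᵥ (y : Fin m → ℝ) := by
    intro x y
    simp [PiLp.inner_apply, dotProduct, mul_comm]
  set c : Fin m → ℝ := fun j => inner (𝕜 := ℝ) (B j) uE with hc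
  have hΓt : Γᵀ = Γ := by
    have := hΓ.eq
    rwa [conjTranspose_eq_transpose_of_trivial] at this
  have hkey : ∀ j, inner (𝕜 := ℝ) (B j) (WithLp.toLp 2 (Γ.mulVec u) : EuclideanSpace ℝ (Fin m))
      = hΓ.eigenvalues j * c j := by
    intro j
    rw [hinner]
    show (B j : Fin m → ℝ) ⬝ᵥ Γ *ᵥ u = _
    rw [Matrix.dotProduct_mulVec, ← Matrix.mulVec_transpose, hΓt]
    erw [hΓ.mulVec_eigenvectorBasis]
    rw [smul_dotProduct, hc]
    simp only []
    rw [hinner]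
    rfl
  have hquad : u ⬝ᵥ Γ.mulVec u = ∑ j, hΓ.eigenvalues j * (c j * c j) := by
    have h := B.sum_inner_mul_inner uE (WithLp.toLp 2 (Γ.mulVec u) : EuclideanSpace ℝ (Fin m))
    have hL : inner (𝕜 := ℝ) uE (WithLp.toLp 2 (Γ.mulVec u) : EuclideanSpace ℝ (Fin m)) = u ⬝ᵥ Γ.mulVec u := by
      rw [hinner]
    rw [hL] at h
    rw [← h]
    refine Finset.sum_congr rfl fun j _ => ?_
    rw [hkey j]
    have h3 : inner (𝕜 := ℝ) uE (B j) = c j := real_inner_comm (B j) uE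
    rw [h3]; ring
  have hnorm : ∑ j, c j * c j = ∑ i, u i ^ 2 := by
    have h := B.sum_inner_mul_inner uE uE
    have h2 : inner (𝕜 := ℝ) uE uE = ∑ i, u i ^ 2 := by
      rw [hinner]; simp [dotProduct, sq]; rfl
    rw [h2] at h
    rw [← h]
    refine Finset.sum_congr rfl fun j _ => ?_
    have h3 : inner (𝕜 := ℝ) uE (B j) = c j := real_inner_comm (B j) uE
    rw [h3]
  rw [hquad, ← hnorm, Finset.mul_sum]
  refine Finset.sum_le_sum fun j _ => ?_
  have h1 : (⨅ i, hΓ.eigenvalues i) ≤ hΓ.eigenvalues j :=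
    ciInf_le (Set.Finite.bddBelow (Set.finite_range _)) j
  exact mul_le_mul_of_nonneg_right h1 (mul_self_nonneg _)

/-- Localized restricted eigenvalue bound: for real symmetric `m × m` matrices `S` and `Γ`,
an index set `J` of size at most `s` and `γ ≥ 0`, every nonzero vector `u` in the cone
`∑_{i ∉ J} |uᵢ| ≤ γ ∑_{i ∈ J} |uᵢ|` satisfies
`uᵀ S u ≥ (λ_min(Γ) − (1+γ)² s ‖S − Γ‖_{∞,∞}) ‖u‖₂²`. -/
theorem restricted_eigenvalue_bound (m s : ℕ) (hm : 0 < m)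
    (S Γ : Matrix (Fin m) (Fin m) ℝ) (hS : S.IsSymm) (hΓ : Γ.IsHermitian)
    (J : Finset (Fin m)) (hJ : J.card ≤ s) (γ : ℝ) (hγ : 0 ≤ γ) :
    ∀ u : Fin m → ℝ, u ≠ 0 →
      (∑ i ∈ Jᶜ, |u i| ≤ γ * ∑ i ∈ J, |u i|) →
      ((⨅ i, hΓ.eigenvalues i) - (1 + γ) ^ 2 * (s : ℝ) * (⨆ i, ⨆ j, |(S - Γ) i j|))
          * ∑ i, u i ^ 2
        ≤ u ⬝ᵥ S.mulVec u := by
  intro u hu hcone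
  haveI : Nonempty (Fin m) := ⟨⟨0, hm⟩⟩
  set M : Matrix (Fin m) (Fin m) ℝ := S - Γ with hM
  set K : ℝ := ⨆ i, ⨆ j, |M i j| with hK
  have hKb : ∀ i j, |M i j| ≤ K := by
    intro i j
    have h1 : |M i j| ≤ ⨆ j, |M i j| :=
      le_ciSup (f := fun j => |M i j|) (Set.Finite.bddAbove (Set.finite_range _)) j
    have h2 : (⨆ j, |M i j|) ≤ K :=
      le_ciSup (f := fun i => ⨆ j, |M i j|) (Set.Finite.bddAbove (Set.finite_range _)) i
    exact h1.trans h2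
  have hK0 : 0 ≤ K := le_trans (abs_nonneg _) (hKb (Classical.arbitrary _) (Classical.arbitrary _))
  -- bound on |uᵀ M u|
  have habs : |u ⬝ᵥ M.mulVec u| ≤ K * (∑ i, |u i|) ^ 2 := by
    have h1 : |u ⬝ᵥ M.mulVec u| ≤ ∑ i, ∑ j, |u i| * K * |u j| := by
      refine le_trans (Finset.abs_sum_le_sum_abs _ _) ?_
      refine Finset.sum_le_sum fun i _ => ?_
      have : |u i * ∑ j, M i j * u j| ≤ ∑ j, |u i| * (K * |u j|) := by
        rw [abs_mul]
        calc |u i| * |∑ j, M i j * u j| ≤ |u i| * ∑ j, |M i j * u j| :=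
            mul_le_mul_of_nonneg_left (Finset.abs_sum_le_sum_abs _ _) (abs_nonneg _)
          _ ≤ ∑ j, |u i| * (K * |u j|) := by
            rw [Finset.mul_sum]
            refine Finset.sum_le_sum fun j _ => ?_
            rw [abs_mul]
            exact mul_le_mul_of_nonneg_left
              (mul_le_mul_of_nonneg_right (hKb i j) (abs_nonneg _))
              (abs_nonneg _)
      simpa [dotProduct, Matrix.mulVec, mul_assoc] using this
    refine h1.trans ?_
    rw [sq, Finset.sum_mul_sum, Finset.mul_sum]
    refine le_of_eq ?_
    refine Finset.sum_congr rfl fun i _ => ?_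
    rw [Finset.mul_sum]
    refine Finset.sum_congr rfl fun j _ => ?_
    ring
  -- cone + Cauchy-Schwarz
  have hsum : (∑ i, |u i|) ^ 2 ≤ (1 + γ) ^ 2 * (s : ℝ) * ∑ i, u i ^ 2 := by
    have h2 : ∑ i, |u i| ≤ (1 + γ) * ∑ i ∈ J, |u i| := by
      rw [← Finset.sum_add_sum_compl J fun i => |u i|]
      calc (∑ i ∈ J, |u i|) + ∑ i ∈ Jᶜ, |u i|
          ≤ (∑ i ∈ J, |u i|) + γ * ∑ i ∈ J, |u i| := by linarith
        _ = (1 + γ) * ∑ i ∈ J, |u i| := by ring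
    have h0 : 0 ≤ ∑ i, |u i| := Finset.sum_nonneg fun i _ => abs_nonneg _
    have h3 : (∑ i, |u i|) ^ 2 ≤ ((1 + γ) * ∑ i ∈ J, |u i|) ^ 2 :=
      pow_le_pow_left₀ h0 h2 2
    have h4 : (∑ i ∈ J, |u i|) ^ 2 ≤ (J.card : ℝ) * ∑ i ∈ J, |u i| ^ 2 :=
      sq_sum_le_card_mul_sum_sq
    have h5 : ∑ i ∈ J, |u i| ^ 2 ≤ ∑ i, u i ^ 2 := by
      refine Finset.sum_le_sum_of_subset_of_nonneg (Finset.subset_univ J)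
        (fun i _ _ => sq_nonneg _) |>.trans_eq ?_
      exact Finset.sum_congr rfl fun i _ => by rw [sq_abs]
    calc (∑ i, |u i|) ^ 2 ≤ (1 + γ) ^ 2 * (∑ i ∈ J, |u i|) ^ 2 := by
          rw [mul_pow] at h3; exact h3
      _ ≤ (1 + γ) ^ 2 * ((J.card : ℝ) * ∑ i, u i ^ 2) := by
          refine mul_le_mul_of_nonneg_left ?_ (by positivity)
          exact h4.trans (mul_le_mul_of_nonneg_left h5 (Nat.cast_nonneg _))
      _ ≤ (1 + γ) ^ 2 * (s : ℝ) * ∑ i, u i ^ 2 := by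
          rw [mul_assoc]
          refine mul_le_mul_of_nonneg_left ?_ (by positivity)
          refine mul_le_mul_of_nonneg_right ?_ (Finset.sum_nonneg fun i _ => sq_nonneg _)
          exact_mod_cast hJ
  have hMlow : -((1 + γ) ^ 2 * (s : ℝ) * K * ∑ i, u i ^ 2) ≤ u ⬝ᵥ M.mulVec u := by
    have := (neg_abs_le (u ⬝ᵥ M.mulVec u))
    refine le_trans ?_ this
    rw [neg_le_neg_iff]
    refine habs.trans ?_
    calc K * (∑ i, |u i|) ^ 2 ≤ K * ((1 + γ) ^ 2 * (s : ℝ) * ∑ i, u i ^ 2) :=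
        mul_le_mul_of_nonneg_left hsum hK0
      _ = (1 + γ) ^ 2 * (s : ℝ) * K * ∑ i, u i ^ 2 := by ring
  have hsplit : u ⬝ᵥ S.mulVec u = u ⬝ᵥ Γ.mulVec u + u ⬝ᵥ M.mulVec u := by
    rw [hM, Matrix.sub_mulVec, dotProduct_sub]; ring
  have hquad := quad_ge m hm Γ hΓ u
  rw [hsplit, sub_mul]
  have : (1 + γ) ^ 2 * (s : ℝ) * K * ∑ i, u i ^ 2 =
      ((1 + γ) ^ 2 * (s : ℝ) * K) * ∑ i, u i ^ 2 := by ring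
  linarith [hMlow, hquad]
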